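/- Policy-over-options gradient theorem for the soft robust loss (Theorem 1): In the finite rectangular option MDP, let the policy over options be a parameterized family πΩ : ℝ → S → O → ℝ (for each θ ∈ ℝ, πΩ θ s ω ≥ 0 and ∑_ω πΩ θ s ω = 1), while πo, β, K, c, w do not depend on θ, and for each θ let (QΩ θ, Qo θ, Qβ θ, VΩ θ) satisfy the rectangular Bellman system with policy over options πΩ θ; let Pγ θ, Pγ^k θ and the averaged value functions Q̄Ω θ be defined accordingly. Define the discounted state weighting κ^k θ ((s₀,ω₀), s'') := ∑_{(s',ω')} Pγ^k θ ((s₀,ω₀),(s',ω')) * ∑_a πo ω' s' a * γ * K̄ s' a s'' * β ω' s'' and d̄ θ ((s₀,ω₀), s) := ∑_{k=0}^∞ κ^k θ ((s₀,ω₀), s) (this series converges since ∑_s κ^k θ ((s₀,ω₀), s) ≤ γ^{k+1} and 0 ≤ γ < 1). Fix θ₀ ∈ ℝ and assume that for every s, ω the map θ ↦ πΩ θ s ω is differentiable at θ₀ and for every s, ω, p the map θ ↦ QΩ θ s ω p is differentiable at θ₀. Then for every initial state–option pair (s₀, ω₀): ∑_p w p * deriv (θ ↦ QΩ θ s₀ ω₀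 p) θ₀ = ∑_s d̄ θ₀ ((s₀,ω₀), s) * ∑_ω (deriv (θ ↦ πΩ θ s ω) θ₀) * Q̄Ω θ₀ s ω. -/

import Mathlib

open scoped Classical

open Finset

variable {S O A P : Type*} [Fintype S] [Fintype O] [Fintype A] [Fintype P]

/-- The average transition kernel `K̄ s a s' = ∑ p, w p * K p s a s'`. -/
noncomputable def Kbar (w : P → ℝ) (K : P → S → A → S → ℝ) (s : S) (a : A) (s' : S) : ℝ :=
  ∑ p, w p * K p s a s'

/-- One-step discounted state–option kernel `Pγ`. -/
noncomputable def Pgam (w : P → ℝ) (K : P → S → A → S → ℝ) (γ : ℝ)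
    (πo : O → S → A → ℝ) (β : O → S → ℝ) (πΩ : S → O → ℝ)
    (x y : S × O) : ℝ :=
  ∑ a, πo x.2 x.1 a * γ * Kbar w K x.1 a y.1 *
    ((1 - β x.2 y.1) * (if y.2 = x.2 then 1 else 0) + β x.2 y.1 * πΩ y.1 y.2)

/-- k-step iterates `Pγ^k` of the one-step discounted state–option kernel. -/
noncomputable def PgamIter (w : P → ℝ) (K : P → S → A → S → ℝ) (γ : ℝ)
    (πo : O → S → A → ℝ) (β : O → S → ℝ) (πΩ : S → O → ℝ) :
    ℕ → S × O → S × O → ℝ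
  | 0, x, y => if y = x then 1 else 0
  | (k + 1), x, y => ∑ z, Pgam w K γ πo β πΩ x z * PgamIter w K γ πo β πΩ k z y

/-- averaged state-option value -/
noncomputable def QbAux (w : P → ℝ) (QΩt : S → O → P → ℝ) (x : S × O) : ℝ :=
  ∑ p, w p * QΩt x.1 x.2 p

/-- the `B` part of the one-step kernel -/
noncomputable def BfAux (w : P → ℝ) (K : P → S → A → S → ℝ) (γ : ℝ)
    (πo : O → S → A → ℝ) (β : O → S → ℝ) (x : S × O) (s : S) : ℝ :=
  ∑ a, πo x.2 x.1 a * γ * Kbar w K x.1 a s * β x.2 s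

/-- the `A` part of the one-step kernel -/
noncomputable def AfAux (w : P → ℝ) (K : P → S → A → S → ℝ) (γ : ℝ)
    (πo : O → S → A → ℝ) (β : O → S → ℝ) (x y : S × O) : ℝ :=
  ∑ a, πo x.2 x.1 a * γ * Kbar w K x.1 a y.1 *
    ((1 - β x.2 y.1) * (if y.2 = x.2 then 1 else 0))

lemma pgam_split (w : P → ℝ) (K : P → S → A → S → ℝ) (γ : ℝ)
    (πo : O → S → A → ℝ) (β : O → S → ℝ) (πΩt : S → O → ℝ) (x y : S × O) :
    Pgam w K γ πo β πΩt x y = AfAux w K γ πo β x y + BfAux w K γ πo β x y.1 * πΩt y.1 y.2 := by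
  simp only [Pgam, AfAux, BfAux, mul_add, Finset.sum_add_distrib, Finset.sum_mul]
  congr 1
  exact Finset.sum_congr rfl fun a _ => by ring

lemma bellman_aux (γ : ℝ) (c : S → A → ℝ) (K : P → S → A → S → ℝ)
    (w : P → ℝ) (hw1 : ∑ p, w p = 1)
    (πΩt : S → O → ℝ)
    (πo : O → S → A → ℝ) (β : O → S → ℝ)
    (QΩt : S → O → P → ℝ) (Qot : S → O → A → P → ℝ) (Qβt : S → O → P → ℝ) (VΩt : S → P → ℝ)
    (hQΩ : ∀ s ω p, QΩt s ω p = ∑ a, πo ω s a * Qot s ω a p)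
    (hQo : ∀ s ω a p, Qot s ω a p = c s a + γ * ∑ s', K p s a s' * (∑ p', w p' * Qβt s' ω p'))
    (hQβ : ∀ s ω p, Qβt s ω p = (1 - β ω s) * QΩt s ω p + β ω s * VΩt s p)
    (hVΩ : ∀ s p, VΩt s p = ∑ ω, πΩt s ω * QΩt s ω p)
    (x : S × O) :
    QbAux w QΩt x =
      (∑ a, πo x.2 x.1 a * c x.1 a) +
        ∑ y, Pgam w K γ πo β πΩt x y * QbAux w QΩt y := by
  obtain ⟨s, ω⟩ := x
  have hE : ∀ s', (∑ p', w p' * Qβt s' ω p') =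
      (1 - β ω s') * QbAux w QΩt (s', ω) +
        β ω s' * ∑ ω', πΩt s' ω' * QbAux w QΩt (s', ω') := by
    intro s'
    simp only [hQβ, hVΩ, QbAux, mul_add, Finset.sum_add_distrib]
    congr 1
    · rw [Finset.mul_sum]; exact Finset.sum_congr rfl fun p _ => by ring
    · rw [Finset.mul_sum]
      simp only [Finset.mul_sum]
      rw [Finset.sum_comm]
      exact Finset.sum_congr rfl fun ω' _ => Finset.sum_congr rfl fun p _ => by ring
  have keyE : ∀ (E : S → ℝ) a, ∑ p, w p * (c s a + γ * ∑ s', K p s a s' * E s') =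
      c s a + γ * ∑ s', Kbar w K s a s' * E s' := by
    intro E a
    simp only [mul_add, Finset.sum_add_distrib]
    congr 1
    · rw [← Finset.sum_mul, hw1, one_mul]
    · simp only [Kbar, Finset.mul_sum, Finset.sum_mul]
      rw [Finset.sum_comm]
      exact Finset.sum_congr rfl fun s' _ => Finset.sum_congr rfl fun p _ => by ring
  have key : ∀ a, ∑ p, w p * Qot s ω a p =
      c s a + γ * ∑ s', Kbar w K s a s' * (∑ p', w p' * Qβt s' ω p') := by
    intro a
    rw [Finset.sum_congr rfl fun p _ => by rw [hQo s ω a p]]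
    exact keyE _ a
  have hL : QbAux w QΩt (s, ω) =
      ∑ a, πo ω s a * (c s a + γ * ∑ s', Kbar w K s a s' * (∑ p', w p' * Qβt s' ω p')) := by
    calc QbAux w QΩt (s, ω) = ∑ a, πo ω s a * ∑ p, w p * Qot s ω a p := by
          simp only [QbAux, hQΩ, Finset.mul_sum]
          rw [Finset.sum_comm]
          exact Finset.sum_congr rfl fun a _ => Finset.sum_congr rfl fun p _ => by ring
      _ = _ := Finset.sum_congr rfl fun a _ => by rw [key a]
  have hR : ∀ s', (∑ ω', Pgam w K γ πo β πΩt (s, ω) (s', ω') * QbAux w QΩt (s', ω'))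
      = ∑ a, πo ω s a * γ * Kbar w K s a s' *
          ((1 - β ω s') * QbAux w QΩt (s', ω) +
            β ω s' * ∑ ω', πΩt s' ω' * QbAux w QΩt (s', ω')) := by
    intro s'
    have gen : ∀ (F : O → ℝ), (∑ ω', Pgam w K γ πo β πΩt (s, ω) (s', ω') * F ω') =
        ∑ a, πo ω s a * γ * Kbar w K s a s' *
          ((1 - β ω s') * F ω + β ω s' * ∑ ω', πΩt s' ω' * F ω') := by
      intro F
      simp only [Pgam, Finset.sum_mul]
      rw [Finset.sum_comm]
      refine Finset.sum_congr rfl fun a _ => ?_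
      simp only [mul_add, add_mul, mul_ite, ite_mul, mul_one, mul_zero, zero_mul,
        Finset.sum_add_distrib, Finset.mul_sum]
      congr 1
      · rw [Finset.sum_ite_eq' Finset.univ ω]
        simp [mul_assoc]
      · exact Finset.sum_congr rfl fun ω' _ => by ring
    exact gen _
  have genAlg : ∀ (E : S → ℝ),
      ∑ a, πo ω s a * (c s a + γ * ∑ s', Kbar w K s a s' * E s') =
        (∑ a, πo ω s a * c s a) + ∑ a, ∑ s', πo ω s a * γ * Kbar w K s a s' * E s' := by
    intro E
    simp only [mul_add, Finset.sum_add_distrib, Finset.mul_sum]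
    congr 1
    exact Finset.sum_congr rfl fun a _ => Finset.sum_congr rfl fun s' _ => by ring
  rw [hL, Fintype.sum_prod_type, genAlg]
  congr 1
  refine Eq.symm ?_
  calc ∑ s', ∑ ω', Pgam w K γ πo β πΩt (s, ω) (s', ω') * QbAux w QΩt (s', ω')
      = ∑ s', ∑ a, πo ω s a * γ * Kbar w K s a s' * (∑ p', w p' * Qβt s' ω p') := by
        refine Finset.sum_congr rfl fun s' _ => ?_
        rw [hR s']
        exact Finset.sum_congr rfl fun a _ => by rw [← hE s']
    _ = ∑ a, ∑ s', πo ω s a * γ * Kbar w K s a s' * (∑ p', w p' * Qβt s' ω p') :=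
        Finset.sum_comm

section Neumann

variable {X : Type*} [Fintype X] [DecidableEq X]

lemma iter_nonneg (P : X → X → ℝ) (hP0 : ∀ x y, 0 ≤ P x y)
    (Pk : ℕ → X → X → ℝ)
    (hPk0 : ∀ x y, Pk 0 x y = if y = x then 1 else 0)
    (hPkS : ∀ k x y, Pk (k + 1) x y = ∑ z, P x z * Pk k z y) :
    ∀ k x y, 0 ≤ Pk k x y := by
  intro k
  induction k with
  | zero => intro x y; rw [hPk0]; split <;> norm_num
  | succ n ih =>
    intro x y; rw [hPkS]
    exact Finset.sum_nonneg fun z _ => mul_nonneg (hP0 x z) (ih z y)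

lemma iter_row_le (γ : ℝ) (hγ0 : 0 ≤ γ)
    (P : X → X → ℝ) (hP0 : ∀ x y, 0 ≤ P x y) (hProw : ∀ x, ∑ y, P x y ≤ γ)
    (Pk : ℕ → X → X → ℝ)
    (hPk0 : ∀ x y, Pk 0 x y = if y = x then 1 else 0)
    (hPkS : ∀ k x y, Pk (k + 1) x y = ∑ z, P x z * Pk k z y) :
    ∀ k x, ∑ y, Pk k x y ≤ γ ^ k := by
  intro k
  induction k with
  | zero => intro x; simp [hPk0]
  | succ n ih =>
    intro x
    have : ∑ y, Pk (n + 1) x y = ∑ z, P x z * ∑ y, Pk n z y := by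
      simp only [hPkS, Finset.mul_sum]
      rw [Finset.sum_comm]
    rw [this, pow_succ']
    calc ∑ z, P x z * ∑ y, Pk n z y ≤ ∑ z, P x z * γ ^ n := by
          refine Finset.sum_le_sum fun z _ => mul_le_mul_of_nonneg_left (ih z) (hP0 x z)
      _ = (∑ z, P x z) * γ ^ n := by rw [Finset.sum_mul]
      _ ≤ γ * γ ^ n := mul_le_mul_of_nonneg_right (hProw x) (pow_nonneg hγ0 n)

lemma iter_bound (γ : ℝ) (hγ0 : 0 ≤ γ)
    (P : X → X → ℝ) (hP0 : ∀ x y, 0 ≤ P x y) (hProw : ∀ x, ∑ y, P x y ≤ γ)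
    (Pk : ℕ → X → X → ℝ)
    (hPk0 : ∀ x y, Pk 0 x y = if y = x then 1 else 0)
    (hPkS : ∀ k x y, Pk (k + 1) x y = ∑ z, P x z * Pk k z y)
    (v : X → ℝ) (M : ℝ) (hM0 : 0 ≤ M) (hM : ∀ y, |v y| ≤ M) :
    ∀ n x, |∑ y, Pk n x y * v y| ≤ γ ^ n * M := by
  intro n x
  have hPknn := iter_nonneg P hP0 Pk hPk0 hPkS
  calc |∑ y, Pk n x y * v y| ≤ ∑ y, |Pk n x y * v y| := Finset.abs_sum_le_sum_abs _ _
    _ ≤ ∑ y, Pk n x y * M := by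
        refine Finset.sum_le_sum fun y _ => ?_
        rw [abs_mul, abs_of_nonneg (hPknn n x y)]
        exact mul_le_mul_of_nonneg_left (hM y) (hPknn n x y)
    _ = (∑ y, Pk n x y) * M := by rw [Finset.sum_mul]
    _ ≤ γ ^ n * M := mul_le_mul_of_nonneg_right (iter_row_le γ hγ0 P hP0 hProw Pk hPk0 hPkS n x) hM0

lemma neumann_aux (γ : ℝ) (hγ0 : 0 ≤ γ) (hγ1 : γ < 1)
    (P : X → X → ℝ) (hP0 : ∀ x y, 0 ≤ P x y) (hProw : ∀ x, ∑ y, P x y ≤ γ)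
    (Pk : ℕ → X → X → ℝ)
    (hPk0 : ∀ x y, Pk 0 x y = if y = x then 1 else 0)
    (hPkS : ∀ k x y, Pk (k + 1) x y = ∑ z, P x z * Pk k z y)
    (u h : X → ℝ) (hu : ∀ x, u x = h x + ∑ y, P x y * u y) (x : X) :
    u x = ∑' k, ∑ y, Pk k x y * h y := by
  have hcomm : ∀ k x z, ∑ y, Pk k x y * P y z = ∑ y, P x y * Pk k y z := by
    intro k
    induction k with
    | zero => intro x z; simp [hPk0, hPkS]
    | succ n ih =>
      intro x z
      calc ∑ y, Pk (n+1) x y * P y z = ∑ y, (∑ t, P x t * Pk n t y) * P y z := by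
            simp only [hPkS]
        _ = ∑ t, P x t * ∑ y, Pk n t y * P y z := by
            simp only [Finset.sum_mul, Finset.mul_sum]
            rw [Finset.sum_comm]
            exact Finset.sum_congr rfl fun t _ => Finset.sum_congr rfl fun y _ => by ring
        _ = ∑ t, P x t * ∑ y, P t y * Pk n y z := by
            exact Finset.sum_congr rfl fun t _ => by rw [ih]
        _ = ∑ y, P x y * Pk (n+1) y z := by
            simp only [hPkS]
  have hpartial : ∀ n x, u x =
      (∑ k ∈ Finset.range n, ∑ y, Pk k x y * h y) + ∑ y, Pk n x y * u y := by
    intro n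
    induction n with
    | zero => intro x; simp [hPk0]
    | succ n ih =>
      intro x
      have h2 : ∑ y, Pk n x y * u y =
          (∑ y, Pk n x y * h y) + ∑ y, Pk (n+1) x y * u y := by
        calc ∑ y, Pk n x y * u y = ∑ y, Pk n x y * (h y + ∑ z, P y z * u z) := by
              exact Finset.sum_congr rfl fun y _ => by rw [← hu]
          _ = (∑ y, Pk n x y * h y) + ∑ y, Pk n x y * ∑ z, P y z * u z := by
              simp [mul_add, Finset.sum_add_distrib]
          _ = (∑ y, Pk n x y * h y) + ∑ z, (∑ y, Pk n x y * P y z) * u z := by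
              congr 1
              simp only [Finset.mul_sum, Finset.sum_mul]
              rw [Finset.sum_comm]
              exact Finset.sum_congr rfl fun z _ => Finset.sum_congr rfl fun y _ => by ring
          _ = (∑ y, Pk n x y * h y) + ∑ z, Pk (n+1) x z * u z := by
              congr 1
              exact Finset.sum_congr rfl fun z _ => by rw [hcomm, ← hPkS]
      rw [Finset.sum_range_succ, ih x, h2]; ring
  obtain ⟨Mu, hMu0, hMu⟩ : ∃ M, 0 ≤ M ∧ ∀ y, |u y| ≤ M :=
    ⟨∑ y, |u y|, Finset.sum_nonneg fun y _ => abs_nonneg _,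
      fun y => Finset.single_le_sum (f := fun y => |u y|) (fun y _ => abs_nonneg _) (Finset.mem_univ y)⟩
  obtain ⟨Mh, hMh0, hMh⟩ : ∃ M, 0 ≤ M ∧ ∀ y, |h y| ≤ M :=
    ⟨∑ y, |h y|, Finset.sum_nonneg fun y _ => abs_nonneg _,
      fun y => Finset.single_le_sum (f := fun y => |h y|) (fun y _ => abs_nonneg _) (Finset.mem_univ y)⟩
  have hbound := iter_bound γ hγ0 P hP0 hProw Pk hPk0 hPkS
  have hsummable : Summable (fun k => ∑ y, Pk k x y * h y) := by
    refine Summable.of_norm_bounded (g := fun k => γ ^ k * Mh)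
      ((summable_geometric_of_lt_one hγ0 hγ1).mul_right Mh) (fun k => ?_)
    exact hbound h Mh hMh0 hMh k x
  have htail : Filter.Tendsto (fun n => ∑ y, Pk n x y * u y) Filter.atTop (nhds 0) := by
    refine squeeze_zero_norm (fun n => hbound u Mu hMu0 hMu n x) ?_
    simpa using (tendsto_pow_atTop_nhds_zero_of_lt_one hγ0 hγ1).mul_const Mu
  have hps : Filter.Tendsto (fun n => ∑ k ∈ Finset.range n, ∑ y, Pk k x y * h y)
      Filter.atTop (nhds (u x)) := by
    have : (fun n => ∑ k ∈ Finset.range n, ∑ y, Pk k x y * h y)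
        = fun n => u x - ∑ y, Pk n x y * u y := by
      funext n; rw [hpartial n x]; ring
    rw [this]
    simpa using (tendsto_const_nhds (x := u x)).sub htail
  exact (tendsto_nhds_unique hps hsummable.hasSum.tendsto_sum_nat)

end Neumann

set_option maxHeartbeats 1000000 in
/-- Policy-over-options gradient theorem for the soft robust loss (Theorem 1). -/
theorem policy_over_options_gradient_soft_robust
    [Nonempty S] [Nonempty O] [Nonempty A] [Nonempty P]
    (γ : ℝ) (hγ0 : 0 ≤ γ) (hγ1 : γ < 1)
    (c : S → A → ℝ)
    (K : P → S → A → S → ℝ)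
    (hK0 : ∀ p s a s', 0 ≤ K p s a s') (hK1 : ∀ p s a, ∑ s', K p s a s' = 1)
    (w : P → ℝ) (hw0 : ∀ p, 0 ≤ w p) (hw1 : ∑ p, w p = 1)
    (πΩ : ℝ → S → O → ℝ)
    (hπΩ0 : ∀ θ s ω, 0 ≤ πΩ θ s ω) (hπΩ1 : ∀ θ s, ∑ ω, πΩ θ s ω = 1)
    (πo : O → S → A → ℝ)
    (hπo0 : ∀ ω s a, 0 ≤ πo ω s a) (hπo1 : ∀ ω s, ∑ a, πo ω s a = 1)
    (β : O → S → ℝ) (hβ0 : ∀ ω s, 0 ≤ β ω s) (hβ1 : ∀ ω s, β ω s ≤ 1)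
    (QΩ : ℝ → S → O → P → ℝ) (Qo : ℝ → S → O → A → P → ℝ)
    (Qβ : ℝ → S → O → P → ℝ) (VΩ : ℝ → S → P → ℝ)
    (hQΩ : ∀ θ s ω p, QΩ θ s ω p = ∑ a, πo ω s a * Qo θ s ω a p)
    (hQo : ∀ θ s ω a p,
      Qo θ s ω a p = c s a + γ * ∑ s', K p s a s' * (∑ p', w p' * Qβ θ s' ω p'))
    (hQβ : ∀ θ s ω p, Qβ θ s ω p = (1 - β ω s) * QΩ θ s ω p + β ω s * VΩ θ s p)
    (hVΩ : ∀ θ s p, VΩ θ s p = ∑ ω, πΩ θ s ω * QΩ θ s ω p)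
    (θ₀ : ℝ)
    (hdπ : ∀ s ω, DifferentiableAt ℝ (fun θ => πΩ θ s ω) θ₀)
    (hdQ : ∀ s ω p, DifferentiableAt ℝ (fun θ => QΩ θ s ω p) θ₀)
    (s₀ : S) (ω₀ : O) :
    ∑ p, w p * deriv (fun θ => QΩ θ s₀ ω₀ p) θ₀ =
      ∑ s, (∑' k : ℕ, ∑ q : S × O,
            PgamIter w K γ πo β (πΩ θ₀) k (s₀, ω₀) q *
              ∑ a, πo q.2 q.1 a * γ * Kbar w K q.1 a s * β q.2 s) *
        (∑ ω, deriv (fun θ => πΩ θ s ω) θ₀ * (∑ p, w p * QΩ θ₀ s ω p)) := by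
  obtain ⟨Pk, hPk_def⟩ : ∃ Pk, Pk = PgamIter w K γ πo β (πΩ θ₀) := ⟨_, rfl⟩
  have hPk0 : ∀ (x y : S × O), Pk 0 x y = if y = x then 1 else 0 := by
    intro x y; rw [hPk_def]; exact if_congr Iff.rfl rfl rfl
  have hPkS : ∀ k (x y : S × O),
      Pk (k + 1) x y = ∑ z, Pgam w K γ πo β (πΩ θ₀) x z * Pk k z y := by
    intro k x y; rw [hPk_def]; rfl
  -- Kbar facts
  have hKb0 : ∀ s a s', 0 ≤ Kbar w K s a s' := fun s a s' =>
    Finset.sum_nonneg fun p _ => mul_nonneg (hw0 p) (hK0 p s a s')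
  have hKb1 : ∀ s a, ∑ s', Kbar w K s a s' = 1 := by
    intro s a
    have : (∑ s', Kbar w K s a s') = ∑ p, w p * ∑ s', K p s a s' := by
      simp only [Kbar]
      rw [Finset.sum_comm]
      exact Finset.sum_congr rfl fun p _ => (Finset.mul_sum _ _ _).symm
    rw [this]
    simp [hK1, hw1]
  have hKble1 : ∀ s a s', Kbar w K s a s' ≤ 1 := by
    intro s a s'
    calc Kbar w K s a s' ≤ ∑ s'', Kbar w K s a s'' :=
          Finset.single_le_sum (fun t _ => hKb0 s a t) (Finset.mem_univ s')
      _ = 1 := hKb1 s a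
  -- one-step kernel facts
  have hP0nn : ∀ x y, 0 ≤ Pgam w K γ πo β (πΩ θ₀) x y := by
    intro x y
    refine Finset.sum_nonneg fun a _ => ?_
    have h1 : 0 ≤ (1 - β x.2 y.1) * (if y.2 = x.2 then (1:ℝ) else 0) +
        β x.2 y.1 * πΩ θ₀ y.1 y.2 :=
      add_nonneg (mul_nonneg (by linarith [hβ1 x.2 y.1]) (by split <;> norm_num))
        (mul_nonneg (hβ0 x.2 y.1) (hπΩ0 θ₀ y.1 y.2))
    exact mul_nonneg (mul_nonneg (mul_nonneg (hπo0 _ _ _) hγ0) (hKb0 _ _ _)) h1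
  have hProw : ∀ x, ∑ y, Pgam w K γ πo β (πΩ θ₀) x y ≤ γ := by
    intro x; obtain ⟨s, ω⟩ := x
    have hstep : ∀ s', (∑ ω', Pgam w K γ πo β (πΩ θ₀) (s, ω) (s', ω'))
        = ∑ a, πo ω s a * γ * Kbar w K s a s' := by
      intro s'
      simp only [Pgam]
      rw [Finset.sum_comm]
      refine Finset.sum_congr rfl fun a _ => ?_
      rw [← Finset.mul_sum]
      have hone : (∑ ω', ((1 - β ω s') * (if ω' = ω then (1:ℝ) else 0) +
          β ω s' * πΩ θ₀ s' ω')) = 1 := by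
        rw [Finset.sum_add_distrib]
        simp only [mul_ite, mul_one, mul_zero]
        rw [Finset.sum_ite_eq' Finset.univ ω, ← Finset.mul_sum, hπΩ1]
        simp
      rw [hone, mul_one]
    rw [Fintype.sum_prod_type]
    simp only [hstep]
    rw [Finset.sum_comm]
    have hrow : ∀ a, ∑ s', πo ω s a * γ * Kbar w K s a s' = πo ω s a * γ := by
      intro a; rw [← Finset.mul_sum, hKb1, mul_one]
    rw [Finset.sum_congr rfl fun a _ => hrow a, ← Finset.sum_mul, hπo1, one_mul]
  -- Bf facts
  have hBf0 : ∀ (x : S × O) s, 0 ≤ BfAux w K γ πo β x s := by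
    intro x s
    refine Finset.sum_nonneg fun a _ => ?_
    exact mul_nonneg (mul_nonneg (mul_nonneg (hπo0 _ _ _) hγ0) (hKb0 _ _ _)) (hβ0 _ _)
  have hBfle : ∀ (x : S × O) s, BfAux w K γ πo β x s ≤ γ := by
    intro x s
    have hπγ : ∀ a, 0 ≤ πo x.2 x.1 a * γ := fun a => mul_nonneg (hπo0 _ _ _) hγ0
    calc BfAux w K γ πo β x s ≤ ∑ a, πo x.2 x.1 a * γ := by
          refine Finset.sum_le_sum fun a _ => ?_
          calc πo x.2 x.1 a * γ * Kbar w K x.1 a s * β x.2 s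
              ≤ πo x.2 x.1 a * γ * Kbar w K x.1 a s * 1 :=
                mul_le_mul_of_nonneg_left (hβ1 _ _)
                  (mul_nonneg (hπγ a) (hKb0 _ _ _))
            _ = πo x.2 x.1 a * γ * Kbar w K x.1 a s := by ring
            _ ≤ πo x.2 x.1 a * γ * 1 :=
                mul_le_mul_of_nonneg_left (hKble1 _ _ _) (hπγ a)
            _ = πo x.2 x.1 a * γ := by ring
      _ = (∑ a, πo x.2 x.1 a) * γ := by rw [Finset.sum_mul]
      _ = γ := by rw [hπo1, one_mul]
  -- the derivative function
  obtain ⟨u, hu_def⟩ : ∃ u : S × O → ℝ,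
      u = fun x => ∑ p, w p * deriv (fun θ => QΩ θ x.1 x.2 p) θ₀ := ⟨_, rfl⟩
  have hdu : ∀ x, HasDerivAt (fun θ => QbAux w (QΩ θ) x) (u x) θ₀ := by
    intro x
    rw [hu_def]
    exact HasDerivAt.fun_sum fun p _ => ((hdQ x.1 x.2 p).hasDerivAt.const_mul (w p))
  -- the fixed-point equation for u
  have hu : ∀ x, u x =
      (∑ y : S × O, BfAux w K γ πo β x y.1 * deriv (fun θ => πΩ θ y.1 y.2) θ₀ *
          QbAux w (QΩ θ₀) y) +
        ∑ y, Pgam w K γ πo β (πΩ θ₀) x y * u y := by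
    intro x
    have heq : (fun θ => QbAux w (QΩ θ) x) = (fun θ => (∑ a, πo x.2 x.1 a * c x.1 a) +
        ∑ y : S × O, (AfAux w K γ πo β x y + BfAux w K γ πo β x y.1 * πΩ θ y.1 y.2) *
          QbAux w (QΩ θ) y) := by
      funext θ
      rw [bellman_aux γ c K w hw1 (πΩ θ) πo β (QΩ θ) (Qo θ) (Qβ θ) (VΩ θ)
        (hQΩ θ) (hQo θ) (hQβ θ) (hVΩ θ) x]
      congr 1
      exact Finset.sum_congr rfl fun y _ => by rw [pgam_split]
    have hd2 : HasDerivAt (fun θ => (∑ a, πo x.2 x.1 a * c x.1 a) +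
        ∑ y : S × O, (AfAux w K γ πo β x y + BfAux w K γ πo β x y.1 * πΩ θ y.1 y.2) *
          QbAux w (QΩ θ) y)
        (∑ y : S × O, ((0 + BfAux w K γ πo β x y.1 * deriv (fun θ => πΩ θ y.1 y.2) θ₀) *
            QbAux w (QΩ θ₀) y +
          (AfAux w K γ πo β x y + BfAux w K γ πo β x y.1 * πΩ θ₀ y.1 y.2) * u y)) θ₀ := by
      refine HasDerivAt.const_add _ ?_
      refine HasDerivAt.fun_sum fun y _ => ?_
      exact ((hasDerivAt_const θ₀ (AfAux w K γ πo β x y)).add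
        (((hdπ y.1 y.2).hasDerivAt).const_mul (BfAux w K γ πo β x y.1))).mul (hdu y)
    have hdux := hdu x
    rw [heq] at hdux
    have huni := hdux.unique hd2
    rw [huni, Finset.sum_add_distrib]
    congr 1
    · exact Finset.sum_congr rfl fun y _ => by rw [zero_add]
    · exact Finset.sum_congr rfl fun y _ => by rw [pgam_split]
  -- Neumann series
  have hmain := neumann_aux γ hγ0 hγ1 (Pgam w K γ πo β (πΩ θ₀)) hP0nn hProw Pk hPk0 hPkS
    u (fun x => ∑ y : S × O, BfAux w K γ πo β x y.1 * deriv (fun θ => πΩ θ y.1 y.2) θ₀ *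
        QbAux w (QΩ θ₀) y) hu (s₀, ω₀)
  -- per-k rearrangement
  have hre : ∀ k, (∑ y : S × O, Pk k (s₀, ω₀) y *
        (∑ z : S × O, BfAux w K γ πo β y z.1 * deriv (fun θ => πΩ θ z.1 z.2) θ₀ *
          QbAux w (QΩ θ₀) z))
      = ∑ s, (∑ q : S × O, Pk k (s₀, ω₀) q * BfAux w K γ πo β q s) *
          (∑ ω, deriv (fun θ => πΩ θ s ω) θ₀ * QbAux w (QΩ θ₀) (s, ω)) := by
    intro k
    have inner : ∀ y : S × O, (∑ z : S × O, BfAux w K γ πo β y z.1 *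
          deriv (fun θ => πΩ θ z.1 z.2) θ₀ * QbAux w (QΩ θ₀) z)
        = ∑ s, BfAux w K γ πo β y s *
            ∑ ω, deriv (fun θ => πΩ θ s ω) θ₀ * QbAux w (QΩ θ₀) (s, ω) := by
      intro y
      rw [Fintype.sum_prod_type]
      refine Finset.sum_congr rfl fun s _ => ?_
      rw [Finset.mul_sum]
      exact Finset.sum_congr rfl fun ω _ => by ring
    have gen : ∀ (Bq : S × O → S → ℝ) (G : S → ℝ),
        (∑ y : S × O, Pk k (s₀, ω₀) y * ∑ s, Bq y s * G s)
          = ∑ s, (∑ y : S × O, Pk k (s₀, ω₀) y * Bq y s) * G s := by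
      intro Bq G
      simp only [Finset.mul_sum, Finset.sum_mul]
      rw [Finset.sum_comm]
      exact Finset.sum_congr rfl fun s _ => Finset.sum_congr rfl fun y _ => by ring
    calc (∑ y : S × O, Pk k (s₀, ω₀) y *
          (∑ z : S × O, BfAux w K γ πo β y z.1 * deriv (fun θ => πΩ θ z.1 z.2) θ₀ *
            QbAux w (QΩ θ₀) z))
        = ∑ y : S × O, Pk k (s₀, ω₀) y * ∑ s, BfAux w K γ πo β y s *
            (∑ ω, deriv (fun θ => πΩ θ s ω) θ₀ * QbAux w (QΩ θ₀) (s, ω)) := by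
          exact Finset.sum_congr rfl fun y _ => by rw [inner y]
      _ = _ := gen (fun y s => BfAux w K γ πo β y s)
            (fun s => ∑ ω, deriv (fun θ => πΩ θ s ω) θ₀ * QbAux w (QΩ θ₀) (s, ω))
  -- summability of each column
  have hsum : ∀ s : S, Summable (fun k =>
      (∑ q : S × O, Pk k (s₀, ω₀) q * BfAux w K γ πo β q s) *
        (∑ ω, deriv (fun θ => πΩ θ s ω) θ₀ * QbAux w (QΩ θ₀) (s, ω))) := by
    intro s
    set Gs := ∑ ω, deriv (fun θ => πΩ θ s ω) θ₀ * QbAux w (QΩ θ₀) (s, ω) with hGs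
    refine Summable.of_norm_bounded (g := fun k => γ ^ k * (γ * |Gs|))
      ((summable_geometric_of_lt_one hγ0 hγ1).mul_right _) (fun k => ?_)
    have hb : |∑ q : S × O, Pk k (s₀, ω₀) q * BfAux w K γ πo β q s| ≤ γ ^ k * γ :=
      iter_bound γ hγ0 _ hP0nn hProw Pk hPk0 hPkS (fun q => BfAux w K γ πo β q s) γ hγ0
        (fun q => by rw [abs_of_nonneg (hBf0 q s)]; exact hBfle q s) k (s₀, ω₀)
    calc ‖(∑ q : S × O, Pk k (s₀, ω₀) q * BfAux w K γ πo β q s) * Gs‖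
        = |∑ q : S × O, Pk k (s₀, ω₀) q * BfAux w K γ πo β q s| * |Gs| := abs_mul _ _
      _ ≤ (γ ^ k * γ) * |Gs| := mul_le_mul_of_nonneg_right hb (abs_nonneg _)
      _ = γ ^ k * (γ * |Gs|) := by ring
  -- assemble
  calc ∑ p, w p * deriv (fun θ => QΩ θ s₀ ω₀ p) θ₀ = u (s₀, ω₀) := by rw [hu_def]
    _ = ∑' k, ∑ y : S × O, Pk k (s₀, ω₀) y *
          (∑ z : S × O, BfAux w K γ πo β y z.1 * deriv (fun θ => πΩ θ z.1 z.2) θ₀ *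
            QbAux w (QΩ θ₀) z) := hmain
    _ = ∑' k, ∑ s, (∑ q : S × O, Pk k (s₀, ω₀) q * BfAux w K γ πo β q s) *
          (∑ ω, deriv (fun θ => πΩ θ s ω) θ₀ * QbAux w (QΩ θ₀) (s, ω)) := tsum_congr hre
    _ = ∑ s, ∑' k, (∑ q : S × O, Pk k (s₀, ω₀) q * BfAux w K γ πo β q s) *
          (∑ ω, deriv (fun θ => πΩ θ s ω) θ₀ * QbAux w (QΩ θ₀) (s, ω)) :=
        Summable.tsum_finsetSum fun s _ => hsum s
    _ = ∑ s, (∑' k, ∑ q : S × O, Pk k (s₀, ω₀) q * BfAux w K γ πo β q s) *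
          (∑ ω, deriv (fun θ => πΩ θ s ω) θ₀ * QbAux w (QΩ θ₀) (s, ω)) :=
        Finset.sum_congr rfl fun s _ => tsum_mul_right
    _ = _ := by
        rw [hPk_def]
        rfl
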